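/- For every n ≥ 4 and every i ∈ ℤ/n, the image of the generator a_i in the group H(n) has infinite order; in particular H(n) is nontrivial for n ≥ 4. -/

import Mathlib

open Function

/-! ### The rank two free group as a coproduct of two copies of `Multiplicative ℤ` -/

abbrev F2 : Type := Monoid.CoprodI (fun _ : Bool => Multiplicative ℤ)

def genF (b : Bool) : F2 := Monoid.CoprodI.of (i := b) (Multiplicative.ofAdd 1)

noncomputable def liftF {G : Type*} [Group G] (a c : G) : F2 →* G :=
  Monoid.CoprodI.lift (fun b => if b then zpowersHom G c else zpowersHom G a)

@[simp] lemma liftF_genF_false {G : Type*} [Group G] (a c : G) :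
    liftF a c (genF false) = a := by
  simp [liftF, genF]

@[simp] lemma liftF_genF_true {G : Type*} [Group G] (a c : G) :
    liftF a c (genF true) = c := by
  simp [liftF, genF]

noncomputable def projF (b₀ : Bool) : F2 →* Multiplicative ℤ :=
  Monoid.CoprodI.lift (fun b => if b = b₀ then MonoidHom.id _ else 1)

@[simp] lemma projF_genF (b₀ b : Bool) :
    projF b₀ (genF b) = if b = b₀ then Multiplicative.ofAdd 1 else 1 := by
  by_cases h : b = b₀ <;> simp [projF, genF, h]

lemma genF_eq_zero_of_eq_one {k l : ℤ}
    (h : genF false ^ k * genF true ^ l = 1) : k = 0 ∧ l = 0 := by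
  have h1 := congrArg (projF false) h
  have h2 := congrArg (projF true) h
  simp only [map_mul, map_zpow, projF_genF, map_one] at h1 h2
  norm_num at h1 h2
  constructor
  · exact congrArg Multiplicative.toAdd h1
  · exact congrArg Multiplicative.toAdd h2

noncomputable def swapF : F2 →* F2 :=
  Monoid.CoprodI.lift (fun b => (Monoid.CoprodI.of (M := fun _ : Bool => Multiplicative ℤ) (i := !b)))

@[simp] lemma swapF_genF (b : Bool) : swapF (genF b) = genF (!b) := by
  simp [swapF, genF]

lemma sep_of_liftF_injective {G : Type*} [Group G] {a c : G}
    (hf : Injective (liftF a c)) {k l : ℤ} (h : a ^ k = c ^ l) : k = 0 := by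
  have key : liftF a c (genF false ^ k * genF true ^ (-l)) = 1 := by
    simp [map_mul, map_zpow, h, zpow_neg]
  have : genF false ^ k * genF true ^ (-l) = 1 := by
    apply hf
    rw [key, map_one]
  exact (genF_eq_zero_of_eq_one this).1

@[simp] lemma swapF_swapF (x : F2) : swapF (swapF x) = x := by
  have : (swapF.comp swapF) = MonoidHom.id F2 := by
    apply Monoid.CoprodI.ext_hom
    intro b
    ext z
    simp [swapF]
  calc swapF (swapF x) = (swapF.comp swapF) x := rfl
    _ = x := by rw [this]; rfl

lemma liftF_comp_swapF {G : Type*} [Group G] (a c : G) :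
    (liftF a c).comp swapF = liftF c a := by
  apply Monoid.CoprodI.ext_hom
  intro b
  ext z
  cases b <;> simp [swapF, liftF]

lemma liftF_swap_injective {G : Type*} [Group G] {a c : G}
    (hf : Injective (liftF a c)) : Injective (liftF c a) := by
  intro x y hxy
  have : liftF a c (swapF x) = liftF a c (swapF y) := by
    have hx : liftF a c (swapF x) = liftF c a x :=
      DFunLike.congr_fun (liftF_comp_swapF a c) x
    have hy : liftF a c (swapF y) = liftF c a y :=
      DFunLike.congr_fun (liftF_comp_swapF a c) y
    rw [hx, hy, hxy]
  have := hf this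
  calc x = swapF (swapF x) := (swapF_swapF x).symm
    _ = swapF (swapF y) := by rw [this]
    _ = y := swapF_swapF y

/-! ### Concrete permutations of `ℚ` -/

def tP : Equiv.Perm ℚ := Equiv.addRight (1 : ℚ)

def u2 : ℚˣ := Units.mk0 2 (by norm_num)

def sP : Equiv.Perm ℚ := MulAction.toPermHom ℚˣ ℚ u2⁻¹

lemma tP_zpow_apply (k : ℤ) (q : ℚ) : (tP ^ k) q = q + k := by
  rw [tP]
  induction k using Int.induction_on generalizing q with
  | zero => simp
  | succ i ih =>
    rw [zpow_add_one, Equiv.Perm.mul_apply, ih]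
    simp only [Equiv.coe_addRight]
    push_cast; ring
  | pred i ih =>
    rw [zpow_sub_one, Equiv.Perm.mul_apply, ih]
    simp only [Equiv.Perm.inv_def, Equiv.addRight_symm, Equiv.coe_addRight]
    push_cast; ring

lemma sP_zpow_apply (k : ℤ) (q : ℚ) : (sP ^ k) q = 2 ^ (-k) * q := by
  have h : sP ^ k = MulAction.toPermHom ℚˣ ℚ (u2 ^ (-k)) := by
    rw [sP, ← map_zpow, zpow_neg, inv_zpow]
  rw [h]
  show ((u2 ^ (-k)) • q) = _
  rw [Units.smul_def, Units.val_zpow_eq_zpow_val]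
  norm_num [u2]

lemma rel_ts : sP⁻¹ * tP * sP = tP ^ 2 := by
  ext q
  have h1 : sP q = 2 ^ (-(1:ℤ)) * q := by
    have := sP_zpow_apply 1 q; simpa using this
  have hm1 : sP⁻¹ q = 2 ^ ((1:ℤ)) * q := by
    have := sP_zpow_apply (-1) q; simpa using this
  have ht : ∀ r : ℚ, tP r = r + 1 := fun r => rfl
  have ht2 : (tP ^ 2) q = q + 2 := by
    have := tP_zpow_apply 2 q; simpa using this
  simp only [Equiv.Perm.mul_apply, ht, ht2]
  have h1' : sP q = 2⁻¹ * q := by rw [h1]; norm_num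
  rw [h1']
  have : sP⁻¹ (2⁻¹ * q + 1) = 2 ^ ((1:ℤ)) * (2⁻¹ * q + 1) := by
    have := sP_zpow_apply (-1) (2⁻¹ * q + 1); simpa using this
  rw [this]
  push_cast
  ring

lemma tP_zpow_eq_sP_zpow {k l : ℤ} (h : tP ^ k = sP ^ l) : k = 0 ∧ l = 0 := by
  have h0 := congrArg (fun (e : Equiv.Perm ℚ) => e 0) h
  simp only [tP_zpow_apply, sP_zpow_apply, zero_add, mul_zero] at h0
  norm_num at h0
  subst h0
  have h1 := congrArg (fun (e : Equiv.Perm ℚ) => e 1) h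
  simp only [tP_zpow_apply, sP_zpow_apply, mul_one] at h1
  norm_num at h1
  have hl : l = 0 := by
    apply zpow_right_injective₀ (by norm_num : (0:ℚ) < 2) (by norm_num : (2:ℚ) ≠ 1)
    show (2:ℚ) ^ l = (2:ℚ) ^ (0:ℤ)
    rw [zpow_zero, h1]
  exact ⟨rfl, hl⟩

lemma tP_inf : ¬ IsOfFinOrder tP := by
  rw [isOfFinOrder_iff_pow_eq_one]
  rintro ⟨m, hm, hpow⟩
  have h : tP ^ (m : ℤ) = sP ^ (0 : ℤ) := by
    rw [zpow_natCast, hpow, zpow_zero]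
  have := (tP_zpow_eq_sP_zpow h).1
  omega

lemma sP_inf : ¬ IsOfFinOrder sP := by
  rw [isOfFinOrder_iff_pow_eq_one]
  rintro ⟨m, hm, hpow⟩
  have h : tP ^ (0 : ℤ) = sP ^ (m : ℤ) := by
    rw [zpow_natCast, hpow, zpow_zero]
  have := (tP_zpow_eq_sP_zpow h).2
  omega

lemma tP_zpow_ne_sP_zpow {k l : ℤ} (hk : k ≠ 0) : tP ^ k ≠ sP ^ l :=
  fun h => hk (tP_zpow_eq_sP_zpow h).1

lemma sP_zpow_ne_tP_zpow {k l : ℤ} (hk : k ≠ 0) : sP ^ k ≠ tP ^ l :=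
  fun h => hk (tP_zpow_eq_sP_zpow h.symm).2

/-! ### Ping-pong: free subgroups of amalgams -/

open Cardinal Monoid Monoid.PushoutI Monoid.PushoutI.NormalWord in
theorem pushout_free {K : Bool → Type} [∀ b, Group (K b)]
    (φ : ∀ b, Multiplicative ℤ →* K b)
    (hφ : ∀ b, Injective (φ b)) (a : K false) (c : K true)
    (ha : ∀ k : ℤ, k ≠ 0 → a ^ k ∉ (φ false).range)
    (hc : ∀ k : ℤ, k ≠ 0 → c ^ k ∉ (φ true).range) :
    Injective (liftF (Monoid.PushoutI.of (φ := φ) false a)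
      (Monoid.PushoutI.of (φ := φ) true c)) := by
  classical
  obtain ⟨d⟩ := Monoid.PushoutI.NormalWord.transversal_nonempty φ hφ
  have key : ∀ (b : Bool) (g : K b), g ∉ (φ b).range → ∀ w : NormalWord d,
      w.fstIdx ≠ some b → (Monoid.PushoutI.of (φ := φ) b g • w).fstIdx = some b := by
    intro b g hgr w hw
    rw [← Monoid.PushoutI.NormalWord.cons_eq_smul g w hw hgr]
    simp [Monoid.PushoutI.NormalWord.cons, Monoid.CoprodI.Word.cons,
      Monoid.CoprodI.Word.fstIdx]
  unfold liftF
  refine Monoid.CoprodI.lift_injective_of_ping_pong _ ?_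
    (fun b => {w : NormalWord d | w.fstIdx = some b}) ?_ ?_ ?_
  · refine Or.inr ⟨true, ?_⟩
    have h1 : #(Multiplicative ℤ) = #ℤ := Cardinal.mk_congr Multiplicative.toAdd
    rw [h1]
    calc (3 : Cardinal) = ((3 : ℕ) : Cardinal) := by norm_num
      _ ≤ Cardinal.aleph0 := (Cardinal.nat_lt_aleph0 3).le
      _ ≤ #ℤ := Cardinal.aleph0_le_mk ℤ
  · intro b
    cases b with
    | false =>
      refine ⟨Monoid.PushoutI.of (φ := φ) false a • NormalWord.empty, ?_⟩
      refine key false a ?_ _ (by simp [NormalWord.empty, Monoid.CoprodI.Word.fstIdx,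
        Monoid.CoprodI.Word.empty])
      simpa using ha 1 one_ne_zero
    | true =>
      refine ⟨Monoid.PushoutI.of (φ := φ) true c • NormalWord.empty, ?_⟩
      refine key true c ?_ _ (by simp [NormalWord.empty, Monoid.CoprodI.Word.fstIdx,
        Monoid.CoprodI.Word.empty])
      simpa using hc 1 one_ne_zero
  · intro b b' hne
    simp only [Function.onFun, Set.disjoint_left, Set.mem_setOf_eq]
    intro w h1 h2
    rw [h1] at h2
    exact hne (Option.some_injective _ h2)
  · intro b b' hne h h1
    intro x hx
    rw [Set.mem_smul_set] at hx
    obtain ⟨w, hw, rfl⟩ := hx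
    have htoadd : Multiplicative.toAdd h ≠ 0 := by
      simpa using h1
    cases b with
    | false =>
      have hb' : b' = true := by
        cases b' with
        | false => exact (hne rfl).elim
        | true => rfl
      subst hb'
      have hfw : w.fstIdx ≠ some false := by rw [hw]; simp
      show _ ∈ {w : NormalWord d | w.fstIdx = some false}
      have : (if (false : Bool) then zpowersHom _ (Monoid.PushoutI.of (φ := φ) true c)
          else zpowersHom _ (Monoid.PushoutI.of (φ := φ) false a)) h
          = Monoid.PushoutI.of (φ := φ) false (a ^ Multiplicative.toAdd h) := by
        simp [map_zpow]
      rw [this]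
      exact key false _ (ha _ htoadd) w hfw
    | true =>
      have hb' : b' = false := by
        cases b' with
        | false => rfl
        | true => exact (hne rfl).elim
      subst hb'
      have hfw : w.fstIdx ≠ some true := by rw [hw]; simp
      show _ ∈ {w : NormalWord d | w.fstIdx = some true}
      have : (if (true : Bool) then zpowersHom _ (Monoid.PushoutI.of (φ := φ) true c)
          else zpowersHom _ (Monoid.PushoutI.of (φ := φ) false a)) h
          = Monoid.PushoutI.of (φ := φ) true (c ^ Multiplicative.toAdd h) := by
        simp [map_zpow]
      rw [this]
      exact key true _ (hc _ htoadd) w hfw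

/-! ### Chain groups -/

lemma map_not_isOfFinOrder {G H : Type*} [Group G] [Group H] (f : G →* H)
    (hf : Injective f) {a : G} (ha : ¬ IsOfFinOrder a) : ¬ IsOfFinOrder (f a) := by
  rw [isOfFinOrder_iff_pow_eq_one] at *
  rintro ⟨n, hn, hpow⟩
  exact ha ⟨n, hn, hf (by rw [map_pow, hpow, map_one])⟩

lemma zpowersHom_injective {G : Type*} [Group G] {g : G} (hg : ¬ IsOfFinOrder g) :
    Injective (zpowersHom G g) := by
  intro h1 h2 hh
  have h3 : Multiplicative.toAdd h1 = Multiplicative.toAdd h2 :=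
    injective_zpow_iff_not_isOfFinOrder.mpr hg (by simpa [zpowersHom_apply] using hh)
  exact Multiplicative.toAdd.injective h3

structure ChainGrp (m : ℕ) : Type 1 where
  G : Type
  [grp : Group G]
  x : ℕ → G
  rel : ∀ i < m, (x (i+1))⁻¹ * x i * x (i+1) = x i ^ 2
  inf : ∀ i ≤ m, ¬ IsOfFinOrder (x i)
  free : Function.Injective (liftF (x 0) (x m))

attribute [instance] ChainGrp.grp

section mkStep

variable {A : Type} [Group A]

def Kfam (A : Type) : Bool → Type
  | false => A
  | true => Equiv.Perm ℚ

instance KfamGroup (A : Type) [Group A] : ∀ b, Group (Kfam A b)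
  | false => ‹Group A›
  | true => inferInstanceAs (Group (Equiv.Perm ℚ))

noncomputable def φfam (p : A) : ∀ b, Multiplicative ℤ →* Kfam A b
  | false => zpowersHom A p
  | true => zpowersHom (Equiv.Perm ℚ) tP

noncomputable def Dbl (p : A) : Type := Monoid.PushoutI (φfam p)

noncomputable instance (p : A) : Group (Dbl p) :=
  inferInstanceAs (Group (Monoid.PushoutI (φfam p)))

noncomputable def inl (p : A) : A →* Dbl p := Monoid.PushoutI.of (φ := φfam p) false

noncomputable def inr (p : A) : Equiv.Perm ℚ →* Dbl p := Monoid.PushoutI.of (φ := φfam p) true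

lemma junction (p : A) : inl p p = inr p tP := by
  have h := Monoid.PushoutI.of_apply_eq_base (φfam p) false (Multiplicative.ofAdd 1)
  have h' := Monoid.PushoutI.of_apply_eq_base (φfam p) true (Multiplicative.ofAdd 1)
  have e1 : φfam p false (Multiplicative.ofAdd 1) = p := by
    show zpowersHom A p (Multiplicative.ofAdd 1) = p
    simp [zpowersHom_apply]
  have e2 : φfam p true (Multiplicative.ofAdd 1) = tP := by
    show zpowersHom (Equiv.Perm ℚ) tP (Multiplicative.ofAdd 1) = tP
    simp [zpowersHom_apply]
  rw [e1] at h
  rw [e2] at h'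
  show Monoid.PushoutI.of (φ := φfam p) false p = Monoid.PushoutI.of (φ := φfam p) true tP
  rw [h, h']

lemma φfam_injective {p : A} (hp : ¬ IsOfFinOrder p) : ∀ b, Injective (φfam p b)
  | false => zpowersHom_injective hp
  | true => zpowersHom_injective tP_inf

noncomputable def mkStep (m : ℕ) (x : ℕ → A)
    (hrel : ∀ i < m, (x (i+1))⁻¹ * x i * x (i+1) = x i ^ 2)
    (hinf : ∀ i ≤ m, ¬ IsOfFinOrder (x i))
    (hsep : ∀ k l : ℤ, x 0 ^ k = x m ^ l → k = 0) : ChainGrp (m+1) where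
  G := Dbl (x m)
  x := fun i => if i ≤ m then inl (x m) (x i) else inr (x m) sP
  rel := by
    intro i hi
    by_cases him : i < m
    · rw [if_pos (Nat.le_of_lt him), if_pos (Nat.succ_le_of_lt him)]
      simp only [← map_inv, ← map_mul, ← map_pow]
      exact congrArg _ (hrel i him)
    · have hieq : i = m := by omega
      subst hieq
      rw [if_pos (le_refl i), if_neg (by omega)]
      rw [junction (x i)]
      simp only [← map_inv, ← map_mul, ← map_pow]
      exact congrArg _ rel_ts
  inf := by
    intro i hi
    by_cases him : i ≤ m
    · rw [if_pos him]
      exact map_not_isOfFinOrder _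
        (Monoid.PushoutI.of_injective (φfam_injective (hinf m le_rfl)) false) (hinf i him)
    · rw [if_neg him]
      exact map_not_isOfFinOrder _
        (Monoid.PushoutI.of_injective (φfam_injective (hinf m le_rfl)) true) sP_inf
  free := by
    have e0 : (if 0 ≤ m then inl (x m) (x 0) else inr (x m) sP) = inl (x m) (x 0) :=
      if_pos (Nat.zero_le m)
    have e1 : (if m + 1 ≤ m then inl (x m) (x (m+1)) else inr (x m) sP) = inr (x m) sP :=
      if_neg (by omega)
    rw [e0, e1]
    refine pushout_free (φfam (x m)) (φfam_injective (hinf m le_rfl)) (x 0) sP ?_ ?_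
    · rintro k hk ⟨h, hh⟩
      have hh2 : zpowersHom A (x m) h = x 0 ^ k := hh
      have hh' : x m ^ (Multiplicative.toAdd h) = x 0 ^ k := by
        rwa [zpowersHom_apply] at hh2
      exact hk (hsep k (Multiplicative.toAdd h) hh'.symm)
    · rintro k hk ⟨h, hh⟩
      have hh2 : zpowersHom (Equiv.Perm ℚ) tP h = sP ^ k := hh
      have hh' : tP ^ (Multiplicative.toAdd h) = sP ^ k := by
        rwa [zpowersHom_apply] at hh2
      exact sP_zpow_ne_tP_zpow hk hh'.symm

end mkStep

noncomputable def chainGrp : (k : ℕ) → ChainGrp (k + 2)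
  | 0 => mkStep 1 (fun i => if i = 0 then tP else sP)
      (by
        intro i hi
        have : i = 0 := by omega
        subst this
        simpa using rel_ts)
      (by
        intro i _
        by_cases h : i = 0
        · subst h; simpa using tP_inf
        · rw [if_neg h]; exact sP_inf)
      (by
        intro k l h
        simp only [if_pos rfl, if_neg (by omega : (1:ℕ) ≠ 0)] at h
        exact (tP_zpow_eq_sP_zpow h).1)
  | (k+1) => mkStep (k+2) (chainGrp k).x (chainGrp k).rel (chainGrp k).inf
      (fun _ _ h => sep_of_liftF_injective (chainGrp k).free h)

/-! ### The amalgam of two chain groups -/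

section Final

variable {GP GQ : Type} [Group GP] [Group GQ]

def Ffam (GP GQ : Type) : Bool → Type
  | false => GP
  | true => GQ

instance FfamGroup (GP GQ : Type) [Group GP] [Group GQ] : ∀ b, Group (Ffam GP GQ b)
  | false => ‹Group GP›
  | true => ‹Group GQ›

noncomputable def ψfam (a c : GP) (a' c' : GQ) : ∀ b, F2 →* Ffam GP GQ b
  | false => liftF a c
  | true => liftF a' c'

end Final

/-! ### Higman's groups -/

/-- The relators of Higman's presentation `ℋ(n)` with generators indexed by `ℤ/n`:
for each `i ∈ ℤ/n`, the word `a_{i+1}⁻¹ a_i a_{i+1} a_i⁻²`. -/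
def Hrels (n : ℕ) : Set (FreeGroup (ZMod n)) :=
  {r | ∃ i : ZMod n, r =
    (FreeGroup.of (i + 1))⁻¹ * FreeGroup.of i * FreeGroup.of (i + 1) *
      (FreeGroup.of i ^ 2)⁻¹}

theorem stmt_9 (n : ℕ) (hn : 4 ≤ n) :
    (∀ i : ZMod n, ¬ IsOfFinOrder (PresentedGroup.of (rels := Hrels n) i)) ∧
      Nontrivial (PresentedGroup (Hrels n)) := by
  haveI : NeZero n := ⟨by omega⟩
  haveI : Fact (1 < n) := ⟨by omega⟩
  -- the two chain groups
  set P := chainGrp 0 with hPdef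
  set Q := chainGrp (n - 4) with hQdef
  set mq := n - 4 + 2 with hmq
  have hmq2 : mq = n - 2 := by omega
  -- the amalgam
  let ψ : ∀ b, F2 →* Ffam P.G Q.G b := ψfam (P.x 0) (P.x 2) (Q.x mq) (Q.x 0)
  have hψ : ∀ b, Injective (ψ b) := by
    intro b
    cases b with
    | false => exact P.free
    | true => exact liftF_swap_injective Q.free
  -- the generators of the image of Higman's group
  let ofF : P.G →* Monoid.PushoutI ψ := Monoid.PushoutI.of (φ := ψ) false
  let ofT : Q.G →* Monoid.PushoutI ψ := Monoid.PushoutI.of (φ := ψ) true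
  let gnat : ℕ → Monoid.PushoutI ψ := fun v => if v ≤ 2 then ofF (P.x v) else ofT (Q.x (v - 2))
  let g : ZMod n → Monoid.PushoutI ψ := fun i => gnat i.val
  -- junction identities
  have j0 : ofF (P.x 0) = ofT (Q.x mq) := by
    have h := Monoid.PushoutI.of_apply_eq_base ψ false (genF false)
    have h' := Monoid.PushoutI.of_apply_eq_base ψ true (genF false)
    have e : ψ false (genF false) = P.x 0 := by
      show liftF (P.x 0) (P.x 2) (genF false) = P.x 0
      simp
    have e' : ψ true (genF false) = Q.x mq := by
      show liftF (Q.x mq) (Q.x 0) (genF false) = Q.x mq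
      simp
    rw [e] at h
    rw [e'] at h'
    show Monoid.PushoutI.of (φ := ψ) false (P.x 0) = Monoid.PushoutI.of (φ := ψ) true (Q.x mq)
    rw [h, h']
  have j2 : ofF (P.x 2) = ofT (Q.x 0) := by
    have h := Monoid.PushoutI.of_apply_eq_base ψ false (genF true)
    have h' := Monoid.PushoutI.of_apply_eq_base ψ true (genF true)
    have e : ψ false (genF true) = P.x 2 := by
      show liftF (P.x 0) (P.x 2) (genF true) = P.x 2
      simp
    have e' : ψ true (genF true) = Q.x 0 := by
      show liftF (Q.x mq) (Q.x 0) (genF true) = Q.x 0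
      simp
    rw [e] at h
    rw [e'] at h'
    show Monoid.PushoutI.of (φ := ψ) false (P.x 2) = Monoid.PushoutI.of (φ := ψ) true (Q.x 0)
    rw [h, h']
  -- description of the generators
  have gP : ∀ v : ℕ, v ≤ 2 → gnat v = ofF (P.x v) := fun v hv => if_pos hv
  have gQ : ∀ v : ℕ, 2 ≤ v → gnat v = ofT (Q.x (v - 2)) := by
    intro v hv
    rcases eq_or_lt_of_le hv with h | h
    · rw [← h]
      show gnat 2 = ofT (Q.x 0)
      rw [gP 2 le_rfl, j2]
    · exact if_neg (by omega)
  -- the cyclic relations hold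
  have grel : ∀ i : ZMod n, (g (i+1))⁻¹ * g i * g (i+1) = g i ^ 2 := by
    intro i
    have hv : i.val < n := ZMod.val_lt i
    have hval : (i + 1).val = (i.val + 1) % n := by
      rw [ZMod.val_add, ZMod.val_one]
    show (gnat (i+1).val)⁻¹ * gnat i.val * gnat (i+1).val = gnat i.val ^ 2
    by_cases hwrap : i.val + 1 = n
    · -- wrap-around relation
      have h0 : (i + 1).val = 0 := by rw [hval, hwrap, Nat.mod_self]
      rw [h0]
      have e1 : gnat 0 = ofT (Q.x mq) := by rw [gP 0 (by omega), j0]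
      have e2 : gnat i.val = ofT (Q.x (n - 3)) := by
        rw [gQ i.val (by omega)]
        congr 1
        congr 1
        omega
      rw [e1, e2]
      rw [show Q.x mq = Q.x ((n - 3) + 1) from congrArg Q.x (by omega)]
      simp only [← map_inv, ← map_mul, ← map_pow]
      exact congrArg _ (Q.rel (n - 3) (by omega))
    · have h1 : (i + 1).val = i.val + 1 := by rw [hval]; exact Nat.mod_eq_of_lt (by omega)
      rw [h1]
      by_cases hsmall : i.val + 1 ≤ 2
      · -- relation inside P
        rw [gP _ hsmall, gP _ (by omega)]
        simp only [← map_inv, ← map_mul, ← map_pow]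
        exact congrArg _ (P.rel i.val (by omega))
      · -- relation inside Q
        rw [gQ (i.val + 1) (by omega), gQ i.val (by omega)]
        have harith : i.val + 1 - 2 = (i.val - 2) + 1 := by omega
        rw [harith]
        simp only [← map_inv, ← map_mul, ← map_pow]
        exact congrArg _ (Q.rel (i.val - 2) (by omega))
  -- the generators have infinite order
  have ginf : ∀ i : ZMod n, ¬ IsOfFinOrder (g i) := by
    intro i
    have hv : i.val < n := ZMod.val_lt i
    show ¬ IsOfFinOrder (gnat i.val)
    by_cases hsmall : i.val ≤ 2
    · rw [gP _ hsmall]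
      exact map_not_isOfFinOrder (H := Monoid.PushoutI ψ) ofF (Monoid.PushoutI.of_injective hψ false)
        (P.inf i.val hsmall)
    · rw [gQ i.val (by omega)]
      exact map_not_isOfFinOrder (H := Monoid.PushoutI ψ) ofT (Monoid.PushoutI.of_injective hψ true)
        (Q.inf (i.val - 2) (by omega))
  -- the homomorphism from Higman's group
  have hhom : ∀ r ∈ Hrels n, FreeGroup.lift g r = 1 := by
    rintro r ⟨i, rfl⟩
    simp only [map_mul, map_inv, map_pow, FreeGroup.lift_apply_of]
    exact mul_inv_eq_one.mpr (grel i)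
  have main : ∀ i : ZMod n, ¬ IsOfFinOrder (PresentedGroup.of (rels := Hrels n) i) := by
    intro i hfin
    have hmap : (PresentedGroup.toGroup hhom) (PresentedGroup.of i) = g i :=
      PresentedGroup.toGroup.of hhom
    rw [isOfFinOrder_iff_pow_eq_one] at hfin
    obtain ⟨m, hm, hpow⟩ := hfin
    have : IsOfFinOrder (g i) := by
      rw [isOfFinOrder_iff_pow_eq_one]
      exact ⟨m, hm, by rw [← hmap, ← map_pow, hpow, map_one]⟩
    exact ginf i this
  refine ⟨main, ⟨PresentedGroup.of 0, 1, fun h => ?_⟩⟩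
  exact main 0 (by rw [h]; exact IsOfFinOrder.one)
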